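/- Let G be a non-bipartite graph and let H_G be the 3-uniform hypergraph obtained from G by adding a new vertex v and taking as edges all triples e \cup {v} for edges e of G. Then there is an absolute constant c' > 0 such that r(H_G, K_n^{(3)}) \ge 2^{c'n}: if there exists a tournament on N vertices with no transitive subtournament of order n, then the coloring of triples of [N] (red iff the triple is a cyclic triangle) contains no red copy of H_G and no blue set of size n. -/

import Mathlib

/-- A tournament on `Fin N`: `r i j = true` means the edge is directed from `i` to `j`. -/
def IsTournament {N : ℕ} (r : Fin N → Fin N → Bool) : Prop :=
  (∀ i, r i i = false) ∧ ∀ i j : Fin N, i ≠ j → r i j = !r j i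

/-- Three vertices form a cyclic (directed) triangle in the tournament `r`. -/
def CyclicTriple {N : ℕ} (r : Fin N → Fin N → Bool) (a b c : Fin N) : Prop :=
  (r a b = true ∧ r b c = true ∧ r c a = true) ∨
  (r a c = true ∧ r c b = true ∧ r b a = true)

/-- `N` is Ramsey for `(H_G, Kₙ⁽³⁾)`, where `H_G` is the 3-uniform hypergraph obtained from
the graph `G` by adding a new vertex `v` (here `Option.none`) and taking as edges all triples
`e ∪ {v}` for edges `e` of `G`: every red-blue coloring of the triples of `{0, …, N-1}`
contains a red copy of `H_G` or a blue set of size `n`. -/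
def HasRamseyHG (V : Type) (G : SimpleGraph V) (N n : ℕ) : Prop :=
  ∀ C : Finset ℕ → Bool,
    (∃ f : Option V → ℕ, Function.Injective f ∧ (∀ x, f x ∈ Finset.range N) ∧
      ∀ a b : V, G.Adj a b → C {f none, f (some a), f (some b)} = true) ∨
    (∃ T : Finset ℕ, T ⊆ Finset.range N ∧ T.card = n ∧
      ∀ e ⊆ T, e.card = 3 → C e = false)

/-- The Ramsey number `r(H_G, Kₙ⁽³⁾)`. -/
noncomputable def rHG (V : Type) (G : SimpleGraph V) (n : ℕ) : ℕ :=
  sInf {N : ℕ | HasRamseyHG V G N n}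

lemma tourn_ne {N : ℕ} {r : Fin N → Fin N → Bool} (ht : IsTournament r) {i j : Fin N}
    (h : r i j = true) : i ≠ j := by
  rintro rfl; rw [ht.1] at h; exact Bool.false_ne_true h

lemma tourn_false {N : ℕ} {r : Fin N → Fin N → Bool} (ht : IsTournament r) {i j : Fin N}
    (hne : i ≠ j) (h : r j i = true) : r i j = false := by
  rw [ht.2 i j hne, h]; rfl

lemma tourn_true {N : ℕ} {r : Fin N → Fin N → Bool} (ht : IsTournament r) {i j : Fin N}
    (hne : i ≠ j) (h : r j i = false) : r i j = true := by
  rw [ht.2 i j hne, h]; rfl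

lemma no_red (V : Type) (G : SimpleGraph V) (hG : ¬ G.Colorable 2) {N : ℕ}
    (r : Fin N → Fin N → Bool) (ht : IsTournament r) :
    ¬ ∃ f : Option V → Fin N, Function.Injective f ∧
      ∀ a b : V, G.Adj a b → CyclicTriple r (f none) (f (some a)) (f (some b)) := by
  rintro ⟨f, hf, hcyc⟩
  apply hG
  have key : ∀ a b : V, G.Adj a b →
      r (f none) (f (some a)) ≠ r (f none) (f (some b)) := by
    intro a b hab
    have hna : f none ≠ f (some a) := fun h => nomatch hf h
    have hnb : f none ≠ f (some b) := fun h => nomatch hf h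
    rcases hcyc a b hab with ⟨h1, _, h3⟩ | ⟨h1, _, h3⟩
    · rw [h1, tourn_false ht hnb h3]; simp
    · rw [h1, tourn_false ht hna h3]; simp
  have col : G.Coloring Bool :=
    SimpleGraph.Coloring.mk (fun a => r (f none) (f (some a)))
      (fun {a b} hab => key a b hab)
  simpa using col.colorable

lemma no_blue {N n : ℕ} (r : Fin N → Fin N → Bool) (ht : IsTournament r)
    (T : Finset (Fin N)) (hc : T.card = n)
    (hT : ∀ a ∈ T, ∀ b ∈ T, ∀ c ∈ T, a ≠ b → a ≠ c → b ≠ c → ¬ CyclicTriple r a b c) :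
    ∃ g : Fin n → Fin N, Function.Injective g ∧
      ∀ i j : Fin n, i < j → r (g i) (g j) = true := by
  classical
  -- transitivity of r inside T
  have htrans : ∀ x ∈ T, ∀ y ∈ T, ∀ z ∈ T,
      r x y = true → r y z = true → r x z = true := by
    intro x hx y hy z hz hxy hyz
    have hxyne : x ≠ y := tourn_ne ht hxy
    have hyzne : y ≠ z := tourn_ne ht hyz
    have hxzne : x ≠ z := by
      rintro rfl
      exact Bool.false_ne_true ((tourn_false ht hxyne hyz).symm.trans hxy)
    by_contra hxz
    have hzx : r z x = true := tourn_true ht hxzne.symm (Bool.eq_false_iff.mpr hxz)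
    exact hT x hx y hy z hz hxyne hxzne hyzne (Or.inl ⟨hxy, hyz, hzx⟩)
  set α := {x // x ∈ T}
  let le : α → α → Bool := fun x y => r x.1 y.1 || decide (x = y)
  have hle_trans : ∀ a b c : α, le a b = true → le b c = true → le a c = true := by
    intro a b c hab hbc
    simp only [le, Bool.or_eq_true, decide_eq_true_eq] at *
    rcases hab with hab | rfl
    · rcases hbc with hbc | rfl
      · exact Or.inl (htrans a.1 a.2 b.1 b.2 c.1 c.2 hab hbc)
      · exact Or.inl hab
    · exact hbc
  have hle_total : ∀ a b : α, (le a b || le b a) = true := by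
    intro a b
    by_cases hab : a = b
    · subst hab; simp [le]
    · have hv : a.1 ≠ b.1 := fun h => hab (Subtype.ext h)
      rcases Bool.eq_false_or_eq_true (r a.1 b.1) with h | h
      · simp [le, h]
      · have : r b.1 a.1 = true := tourn_true ht hv.symm h
        simp [le, this]
  let l : List α := T.attach.toList
  let l' : List α := l.mergeSort le
  have hperm : l'.Perm l := List.mergeSort_perm l le
  have hnodup : l'.Nodup := hperm.nodup_iff.mpr (Finset.nodup_toList _)
  have hsorted := List.pairwise_mergeSort hle_trans hle_total l
  have hlen : l'.length = n := by
    rw [hperm.length_eq, Finset.length_toList, Finset.card_attach, hc]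
  refine ⟨fun i => (l'.get (Fin.cast hlen.symm i)).1, ?_, ?_⟩
  · intro i j h
    have h2 := (List.nodup_iff_injective_get.mp hnodup) (Subtype.ext h)
    have h3 : (Fin.cast hlen.symm i).val = (Fin.cast hlen.symm j).val := congrArg Fin.val h2
    exact Fin.ext h3
  · intro i j hij
    have hlt : (Fin.cast hlen.symm i) < (Fin.cast hlen.symm j) := hij
    have hrel : le (l'.get (Fin.cast hlen.symm i)) (l'.get (Fin.cast hlen.symm j)) = true := by
      have := List.pairwise_iff_get.mp hsorted _ _ hlt
      exact this
    have hne : l'.get (Fin.cast hlen.symm i) ≠ l'.get (Fin.cast hlen.symm j) := by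
      intro h
      have h2 := (List.nodup_iff_injective_get.mp hnodup) h
      have h3 : (Fin.cast hlen.symm i).val = (Fin.cast hlen.symm j).val := congrArg Fin.val h2
      have h4 : (i : ℕ) < j := hij
      have h5 : (i : ℕ) = (j : ℕ) := h3
      omega
    simp only [le, Bool.or_eq_true, decide_eq_true_eq] at hrel
    rcases hrel with h | h
    · exact h
    · exact absurd h hne


/-- tournament from edge-direction data on increasing pairs -/
def rof {N : ℕ} (d : {p : Fin N × Fin N // p.1 < p.2} → Bool) : Fin N → Fin N → Bool :=
  fun i j => if h : i < j then d ⟨(i,j), h⟩ else if h' : j < i then !d ⟨(j,i), h'⟩ else false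

lemma rof_tourn {N : ℕ} (d : {p : Fin N × Fin N // p.1 < p.2} → Bool) :
    IsTournament (rof d) := by
  refine ⟨fun i => by simp [rof], fun i j hne => ?_⟩
  rcases lt_or_gt_of_ne hne with h | h
  · rw [rof, rof, dif_pos h, dif_neg (not_lt_of_gt h), dif_pos h, Bool.not_not]
  · rw [rof, rof, dif_neg (not_lt_of_gt h), dif_pos h, dif_pos h]

lemma card_ltpairs (n : ℕ) :
    Fintype.card {p : Fin n × Fin n // p.1 < p.2} = ∑ i ∈ Finset.range n, i := by
  have e : {p : Fin n × Fin n // p.1 < p.2} ≃ Σ j : Fin n, Fin j.1 :=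
    { toFun := fun p => ⟨p.1.2, ⟨p.1.1.1, p.2⟩⟩
      invFun := fun q => ⟨(⟨q.2.1, lt_trans q.2.2 q.1.2⟩, q.1), q.2.2⟩
      left_inv := fun p => by
        apply Subtype.ext
        apply Prod.ext
        · apply Fin.ext; rfl
        · rfl
      right_inv := fun q => by
        apply Sigma.ext
        · rfl
        · apply heq_of_eq; apply Fin.ext; rfl }
  rw [Fintype.card_congr e, Fintype.card_sigma]
  simp only [Fintype.card_fin]
  exact Fin.sum_univ_eq_sum_range (fun i => i) n

lemma card_constrained {γ : Type*} [Fintype γ] [DecidableEq γ] (s : Finset γ) (v : γ → Bool) :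
    (Finset.univ.filter (fun d : γ → Bool => ∀ p ∈ s, d p = v p)).card
      = 2 ^ (Fintype.card γ - s.card) := by
  classical
  have h1 : (Finset.univ.filter (fun d : γ → Bool => ∀ p ∈ s, d p = v p)).card
      = Fintype.card {d : γ → Bool // ∀ p ∈ s, d p = v p} := (Fintype.card_subtype _).symm
  rw [h1]
  have e : {d : γ → Bool // ∀ p ∈ s, d p = v p} ≃ ({x : γ // x ∉ s} → Bool) :=
    { toFun := fun d x => d.1 x.1
      invFun := fun f => ⟨fun p => if h : p ∈ s then v p else f ⟨p, h⟩,
        fun p hp => dif_pos hp⟩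
      left_inv := fun d => by
        apply Subtype.ext
        funext p
        by_cases h : p ∈ s
        · simp only [dif_pos h]
          exact (d.2 p h).symm
        · simp only [dif_neg h]
      right_inv := fun f => by
        funext x
        simp only [dif_neg x.2] }
  rw [Fintype.card_congr e, Fintype.card_fun, Fintype.card_bool]
  congr 1
  have : Fintype.card {x : γ // x ∉ s} = Fintype.card γ - Fintype.card {x : γ // x ∈ s} := by
    simpa using Fintype.card_subtype_compl (fun x => x ∈ s)
  rw [this, Fintype.card_coe]

def psiFun {N n : ℕ} (g : Fin n ↪ Fin N) (q : {p : Fin n × Fin n // p.1 < p.2}) :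
    {p : Fin N × Fin N // p.1 < p.2} :=
  if h : g q.1.1 < g q.1.2 then ⟨(g q.1.1, g q.1.2), h⟩
  else ⟨(g q.1.2, g q.1.1),
    lt_of_le_of_ne (not_lt.mp h) (fun he => Ne.symm (ne_of_lt q.2) (g.injective he))⟩

lemma psiFun_inj {N n : ℕ} (g : Fin n ↪ Fin N) : Function.Injective (psiFun g) := by
  intro q q' he
  unfold psiFun at he
  apply Subtype.ext
  by_cases h : g q.1.1 < g q.1.2 <;> by_cases h' : g q'.1.1 < g q'.1.2
  · rw [dif_pos h, dif_pos h'] at he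
    simp only [Subtype.mk.injEq, Prod.mk.injEq] at he
    exact Prod.ext_iff.mpr ⟨g.injective he.1, g.injective he.2⟩
  · rw [dif_pos h, dif_neg h'] at he
    simp only [Subtype.mk.injEq, Prod.mk.injEq] at he
    have e1 : q.1.1 = q'.1.2 := g.injective he.1
    have e2 : q.1.2 = q'.1.1 := g.injective he.2
    have hcon : q'.1.2 < q'.1.1 := by rw [← e1, ← e2]; exact q.2
    exact absurd (lt_trans q'.2 hcon) (lt_irrefl _)
  · rw [dif_neg h, dif_pos h'] at he
    simp only [Subtype.mk.injEq, Prod.mk.injEq] at he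
    have e1 : q.1.2 = q'.1.1 := g.injective he.1
    have e2 : q.1.1 = q'.1.2 := g.injective he.2
    have hcon : q'.1.2 < q'.1.1 := by rw [← e1, ← e2]; exact q.2
    exact absurd (lt_trans q'.2 hcon) (lt_irrefl _)
  · rw [dif_neg h, dif_neg h'] at he
    simp only [Subtype.mk.injEq, Prod.mk.injEq] at he
    exact Prod.ext_iff.mpr ⟨g.injective he.2, g.injective he.1⟩

lemma exists_tournament (n N : ℕ)
    (hN : N ^ n < 2 ^ (∑ i ∈ Finset.range n, i)) :
    ∃ r : Fin N → Fin N → Bool, IsTournament r ∧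
      ¬ ∃ g : Fin n → Fin N, Function.Injective g ∧
        ∀ i j : Fin n, i < j → r (g i) (g j) = true := by
  classical
  by_cases hinj : ∃ g : Fin n → Fin N, Function.Injective g
  swap
  · exact ⟨rof (fun _ => true), rof_tourn _, fun ⟨g, hg, _⟩ => hinj ⟨g, hg⟩⟩
  obtain ⟨g₀, hg₀⟩ := hinj
  set m := Fintype.card {p : Fin n × Fin n // p.1 < p.2} with hm
  set M := Fintype.card {p : Fin N × Fin N // p.1 < p.2} with hM
  have hmM : m ≤ M := Fintype.card_le_of_injective _ (psiFun_inj ⟨g₀, hg₀⟩)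
  -- the bad sets
  let Bad : (Fin n → Fin N) → Finset ({p : Fin N × Fin N // p.1 < p.2} → Bool) :=
    fun g => Finset.univ.filter
      (fun d => ∀ i j : Fin n, i < j → rof d (g i) (g j) = true)
  have hBad : ∀ g : Fin n ↪ Fin N, (Bad g).card ≤ 2 ^ (M - m) := by
    intro g
    have hsub : Bad g ⊆ Finset.univ.filter
        (fun d => ∀ p ∈ Finset.univ.image (psiFun g), d p =
          decide (∃ i j : Fin n, i < j ∧ g i = p.1.1 ∧ g j = p.1.2)) := by
      intro d hd
      simp only [Bad, Finset.mem_filter, Finset.mem_univ, true_and] at hd ⊢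
      intro p hp
      simp only [Finset.mem_image, Finset.mem_univ, true_and] at hp
      obtain ⟨q, rfl⟩ := hp
      obtain ⟨⟨i, j⟩, hij⟩ := q
      have hd' := hd i j hij
      by_cases h : g i < g j
      · have hpsi : psiFun g ⟨(i,j), hij⟩ = ⟨(g i, g j), h⟩ := dif_pos h
        rw [hpsi]
        rw [rof, dif_pos h] at hd'
        rw [hd']
        symm
        simp only [decide_eq_true_eq]
        exact ⟨i, j, hij, rfl, rfl⟩
      · have hlt : g j < g i :=
          lt_of_le_of_ne (not_lt.mp h) (fun he => Ne.symm (ne_of_lt hij) (g.injective he))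
        have hpsi : psiFun g ⟨(i,j), hij⟩ = ⟨(g j, g i), hlt⟩ := dif_neg h
        rw [hpsi]
        rw [rof, dif_neg h, dif_pos hlt, Bool.not_eq_true'] at hd'
        rw [hd']
        symm
        simp only [decide_eq_false_iff_not]
        rintro ⟨a, b, hab, ha, hb⟩
        have ha' : a = j := g.injective ha
        have hb' : b = i := g.injective hb
        subst ha'; subst hb'
        exact absurd hij (not_lt_of_gt hab)
    calc (Bad g).card ≤ _ := Finset.card_le_card hsub
      _ = 2 ^ (M - (Finset.univ.image (psiFun g)).card) := card_constrained _ _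
      _ = 2 ^ (M - m) := by
          rw [Finset.card_image_of_injective _ (psiFun_inj g), Finset.card_univ]
  -- union bound
  let I : Finset (Fin n → Fin N) := Finset.univ.filter Function.Injective
  have hunion : (I.biUnion Bad).card < Finset.univ.card
      (α := {p : Fin N × Fin N // p.1 < p.2} → Bool) := by
    calc (I.biUnion Bad).card ≤ ∑ g ∈ I, (Bad g).card := Finset.card_biUnion_le
      _ ≤ ∑ _g ∈ I, 2 ^ (M - m) := by
          apply Finset.sum_le_sum
          intro g hg
          simp only [I, Finset.mem_filter] at hg
          exact hBad ⟨g, hg.2⟩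
      _ = I.card * 2 ^ (M - m) := by rw [Finset.sum_const, smul_eq_mul]
      _ ≤ N ^ n * 2 ^ (M - m) := by
          apply Nat.mul_le_mul_right
          calc I.card ≤ (Finset.univ : Finset (Fin n → Fin N)).card :=
                Finset.card_filter_le _ _
            _ = N ^ n := by rw [Finset.card_univ, Fintype.card_fun] ; simp
      _ < 2 ^ m * 2 ^ (M - m) := by
          refine (Nat.mul_lt_mul_right (Nat.two_pow_pos _)).mpr ?_
          rw [hm, card_ltpairs]
          exact hN
      _ = 2 ^ M := by rw [← pow_add, Nat.add_sub_cancel' hmM]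
      _ = Finset.univ.card := by rw [Finset.card_univ, Fintype.card_fun] ; simp [hM]
  have hne : I.biUnion Bad ≠ Finset.univ := by
    intro h
    rw [h] at hunion
    exact lt_irrefl _ hunion
  have hex : ¬ ∀ d, d ∈ I.biUnion Bad := fun h => hne (Finset.eq_univ_of_forall h)
  push_neg at hex
  obtain ⟨d, hd⟩ := hex
  refine ⟨rof d, rof_tourn d, ?_⟩
  rintro ⟨g, hg, hgood⟩
  apply hd
  apply Finset.mem_biUnion.mpr
  refine ⟨g, ?_, ?_⟩
  · simp only [I, Finset.mem_filter, Finset.mem_univ, true_and]; exact hg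
  · simp only [Bad, Finset.mem_filter, Finset.mem_univ, true_and]; exact hgood



/-- Ramsey property for `k`-uniform colorings. -/
def Ram (k R s t : ℕ) : Prop :=
  ∀ S : Finset ℕ, R ≤ S.card → ∀ C : Finset ℕ → Bool,
    (∃ A ⊆ S, A.card = s ∧ ∀ e ⊆ A, e.card = k → C e = true) ∨
    (∃ B ⊆ S, B.card = t ∧ ∀ e ⊆ B, e.card = k → C e = false)

lemma ram_small_left {k s t : ℕ} (h : s < k) : Ram k s s t := by
  intro S hS C
  obtain ⟨A, hA, hAc⟩ := Finset.exists_subset_card_eq hS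
  exact Or.inl ⟨A, hA, hAc, fun e he hek =>
    absurd (Finset.card_le_card he) (by omega)⟩

lemma ram_small_right {k s t : ℕ} (h : t < k) : Ram k t s t := by
  intro S hS C
  obtain ⟨B, hB, hBc⟩ := Finset.exists_subset_card_eq hS
  exact Or.inr ⟨B, hB, hBc, fun e he hek =>
    absurd (Finset.card_le_card he) (by omega)⟩

lemma erase_subset_of_subset_insert {v : ℕ} {A e : Finset ℕ} (he : e ⊆ insert v A) :
    e.erase v ⊆ A := by
  intro x hx
  obtain ⟨hxv, hxe⟩ := Finset.mem_erase.mp hx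
  rcases Finset.mem_insert.mp (he hxe) with h | h
  · exact absurd h hxv
  · exact h

lemma subset_of_subset_insert_not_mem {v : ℕ} {A e : Finset ℕ} (he : e ⊆ insert v A)
    (hve : v ∉ e) : e ⊆ A := by
  intro x hx
  rcases Finset.mem_insert.mp (he hx) with h | h
  · exact absurd (h ▸ hx) hve
  · exact h

lemma ramsey2 (s t : ℕ) : ∃ R, Ram 2 R s t := by
  have key : ∀ K s t : ℕ, s + t ≤ K → ∃ R, Ram 2 R s t := by
    intro K
    induction K with
    | zero => exact fun s t h => ⟨s, ram_small_left (by omega)⟩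
    | succ K ih =>
      intro s t hst
      by_cases hs : s < 2
      · exact ⟨s, ram_small_left hs⟩
      by_cases ht : t < 2
      · exact ⟨t, ram_small_right ht⟩
      obtain ⟨Ra, hRa⟩ := ih (s - 1) t (by omega)
      obtain ⟨Rb, hRb⟩ := ih s (t - 1) (by omega)
      refine ⟨Ra + Rb + 1, ?_⟩
      intro S hS C
      obtain ⟨v, hv⟩ := Finset.card_pos.mp (by omega : 0 < S.card)
      set S' := S.erase v with hS'
      have hS'card : Ra + Rb ≤ S'.card := by
        rw [hS', Finset.card_erase_of_mem hv]; omega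
      set Red := S'.filter (fun u => C {v, u} = true) with hRed
      set Blue := S'.filter (fun u => ¬ (C {v, u} = true)) with hBlue
      have hsplit : Red.card + Blue.card = S'.card :=
        Finset.card_filter_add_card_filter_not _
      rcases le_or_gt Ra Red.card with hcase | hcase
      · -- many red neighbours
        rcases hRa Red hcase C with ⟨A, hA, hAcard, hAe⟩ | ⟨B, hB, hBcard, hBe⟩
        · -- red (s-1)-set: add v
          have hAS' : A ⊆ S' := hA.trans (Finset.filter_subset _ _)
          have hvA : v ∉ A := fun h => (Finset.mem_erase.mp (hAS' h)).1 rfl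
          refine Or.inl ⟨insert v A, ?_, ?_, ?_⟩
          · intro x hx
            rcases Finset.mem_insert.mp hx with h | h
            · exact h ▸ hv
            · exact Finset.mem_of_mem_erase (hAS' h)
          · rw [Finset.card_insert_of_notMem hvA, hAcard]; omega
          · intro e he hek
            by_cases hve : v ∈ e
            · have he' : e.erase v ⊆ A := erase_subset_of_subset_insert he
              have hcard' : (e.erase v).card = 1 := by
                rw [Finset.card_erase_of_mem hve, hek]
              obtain ⟨u, hu⟩ := Finset.card_eq_one.mp hcard'
              have huA : u ∈ A := by
                have := he' (hu ▸ Finset.mem_singleton_self u)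
                exact this
              have huRed := hA huA
              rw [hRed, Finset.mem_filter] at huRed
              have : e = {v, u} := by
                rw [← Finset.insert_erase hve, hu]
              rw [this]
              exact huRed.2
            · exact hAe e (subset_of_subset_insert_not_mem he hve) hek
        · -- blue t-set
          exact Or.inr ⟨B, hB.trans ((Finset.filter_subset _ _).trans
            (Finset.erase_subset _ _)), hBcard, hBe⟩
      · -- many blue neighbours
        have hcase' : Rb ≤ Blue.card := by omega
        rcases hRb Blue hcase' C with ⟨A, hA, hAcard, hAe⟩ | ⟨B, hB, hBcard, hBe⟩
        · exact Or.inl ⟨A, hA.trans ((Finset.filter_subset _ _).trans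
            (Finset.erase_subset _ _)), hAcard, hAe⟩
        · have hBS' : B ⊆ S' := hB.trans (Finset.filter_subset _ _)
          have hvB : v ∉ B := fun h => (Finset.mem_erase.mp (hBS' h)).1 rfl
          refine Or.inr ⟨insert v B, ?_, ?_, ?_⟩
          · intro x hx
            rcases Finset.mem_insert.mp hx with h | h
            · exact h ▸ hv
            · exact Finset.mem_of_mem_erase (hBS' h)
          · rw [Finset.card_insert_of_notMem hvB, hBcard]; omega
          · intro e he hek
            by_cases hve : v ∈ e
            · have he' : e.erase v ⊆ B := erase_subset_of_subset_insert he
              have hcard' : (e.erase v).card = 1 := by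
                rw [Finset.card_erase_of_mem hve, hek]
              obtain ⟨u, hu⟩ := Finset.card_eq_one.mp hcard'
              have huB : u ∈ B := he' (hu ▸ Finset.mem_singleton_self u)
              have huBlue := hB huB
              rw [hBlue, Finset.mem_filter] at huBlue
              have : e = {v, u} := by
                rw [← Finset.insert_erase hve, hu]
              rw [this]
              exact Bool.not_eq_true _ ▸ huBlue.2
            · exact hBe e (subset_of_subset_insert_not_mem he hve) hek
  exact key (s + t) s t le_rfl

lemma ramsey3 (s t : ℕ) : ∃ R, Ram 3 R s t := by
  have key : ∀ K s t : ℕ, s + t ≤ K → ∃ R, Ram 3 R s t := by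
    intro K
    induction K with
    | zero => exact fun s t h => ⟨s, ram_small_left (by omega)⟩
    | succ K ih =>
      intro s t hst
      by_cases hs : s < 3
      · exact ⟨s, ram_small_left hs⟩
      by_cases ht : t < 3
      · exact ⟨t, ram_small_right ht⟩
      obtain ⟨Ra, hRa⟩ := ih (s - 1) t (by omega)
      obtain ⟨Rb, hRb⟩ := ih s (t - 1) (by omega)
      obtain ⟨R2, hR2⟩ := ramsey2 Ra Rb
      refine ⟨R2 + 1, ?_⟩
      intro S hS C
      obtain ⟨v, hv⟩ := Finset.card_pos.mp (by omega : 0 < S.card)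
      set S' := S.erase v with hS'
      have hS'card : R2 ≤ S'.card := by
        rw [hS', Finset.card_erase_of_mem hv]; omega
      set D : Finset ℕ → Bool := fun e => C (insert v e) with hD
      have hDC : ∀ e : Finset ℕ, v ∉ e → e.card = 2 → D e = C (insert v e) := fun _ _ _ => rfl
      rcases hR2 S' hS'card D with ⟨U, hU, hUcard, hUe⟩ | ⟨U, hU, hUcard, hUe⟩
      · -- all pairs in U together with v are red
        rcases hRa U (le_of_eq hUcard.symm) C with ⟨A, hA, hAcard, hAe⟩ | ⟨B, hB, hBcard, hBe⟩
        · have hAS' : A ⊆ S' := hA.trans hU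
          have hvA : v ∉ A := fun h => (Finset.mem_erase.mp (hAS' h)).1 rfl
          refine Or.inl ⟨insert v A, ?_, ?_, ?_⟩
          · intro x hx
            rcases Finset.mem_insert.mp hx with h | h
            · exact h ▸ hv
            · exact Finset.mem_of_mem_erase (hAS' h)
          · rw [Finset.card_insert_of_notMem hvA, hAcard]; omega
          · intro e he hek
            by_cases hve : v ∈ e
            · have he' : e.erase v ⊆ A := erase_subset_of_subset_insert he
              have hcard' : (e.erase v).card = 2 := by
                rw [Finset.card_erase_of_mem hve, hek]
              have hee : e = insert v (e.erase v) := (Finset.insert_erase hve).symm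
              have := hUe (e.erase v) (he'.trans hA) hcard'
              rw [hD] at this
              rw [hee]
              exact this
            · exact hAe e (subset_of_subset_insert_not_mem he hve) hek
        · exact Or.inr ⟨B, hB.trans (hU.trans (Finset.erase_subset _ _)), hBcard, hBe⟩
      · -- all pairs in U together with v are blue
        rcases hRb U (le_of_eq hUcard.symm) C with ⟨A, hA, hAcard, hAe⟩ | ⟨B, hB, hBcard, hBe⟩
        · exact Or.inl ⟨A, hA.trans (hU.trans (Finset.erase_subset _ _)), hAcard, hAe⟩
        · have hBS' : B ⊆ S' := hB.trans hU
          have hvB : v ∉ B := fun h => (Finset.mem_erase.mp (hBS' h)).1 rfl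
          refine Or.inr ⟨insert v B, ?_, ?_, ?_⟩
          · intro x hx
            rcases Finset.mem_insert.mp hx with h | h
            · exact h ▸ hv
            · exact Finset.mem_of_mem_erase (hBS' h)
          · rw [Finset.card_insert_of_notMem hvB, hBcard]; omega
          · intro e he hek
            by_cases hve : v ∈ e
            · have he' : e.erase v ⊆ B := erase_subset_of_subset_insert he
              have hcard' : (e.erase v).card = 2 := by
                rw [Finset.card_erase_of_mem hve, hek]
              have hee : e = insert v (e.erase v) := (Finset.insert_erase hve).symm
              have := hUe (e.erase v) (he'.trans hB) hcard'
              rw [hD] at this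
              rw [hee]
              exact this
            · exact hBe e (subset_of_subset_insert_not_mem he hve) hek
  exact key (s + t) s t le_rfl

lemma cyc_ne {N : ℕ} {r : Fin N → Fin N → Bool} (ht : IsTournament r) {a b c : Fin N}
    (h : CyclicTriple r a b c) : a ≠ b ∧ a ≠ c ∧ b ≠ c := by
  rcases h with ⟨h1, h2, h3⟩ | ⟨h1, h2, h3⟩
  · exact ⟨tourn_ne ht h1, (tourn_ne ht h3).symm, tourn_ne ht h2⟩
  · exact ⟨(tourn_ne ht h3).symm, tourn_ne ht h1, (tourn_ne ht h2).symm⟩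

lemma cyc_of_mem {N : ℕ} {r : Fin N → Fin N → Bool} {x y z u v w : Fin N}
    (h : CyclicTriple r x y z)
    (hu : u = x ∨ u = y ∨ u = z) (hv : v = x ∨ v = y ∨ v = z) (hw : w = x ∨ w = y ∨ w = z)
    (huv : u ≠ v) (huw : u ≠ w) (hvw : v ≠ w) : CyclicTriple r u v w := by
  unfold CyclicTriple at *
  rcases hu with rfl | rfl | rfl <;> rcases hv with rfl | rfl | rfl <;>
    rcases hw with rfl | rfl | rfl <;>
    first
      | exact absurd rfl huv
      | exact absurd rfl huw
      | exact absurd rfl hvw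
      | tauto

lemma hasRamsey_exists (V : Type) [Fintype V] (G : SimpleGraph V) (n : ℕ) :
    ∃ N, HasRamseyHG V G N n := by
  classical
  obtain ⟨R, hR⟩ := ramsey3 (Fintype.card V + 1) n
  refine ⟨R, fun C => ?_⟩
  rcases hR (Finset.range R) (by rw [Finset.card_range]) C with
    ⟨A, hAsub, hAcard, hAe⟩ | ⟨B, hBsub, hBcard, hBe⟩
  · -- red clique of size |V|+1 gives a red copy of H_G
    have hcard : A.card = Fintype.card (Option V) := by
      rw [hAcard, Fintype.card_option]
    let e1 := Fintype.equivFin (Option V)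
    let e2 := A.orderIsoOfFin hcard.symm.symm
    let f : Option V → ℕ := fun x => (e2 (Fin.cast (by rw [Fintype.card_option]) (e1 x))).1
    have finj : Function.Injective f := by
      intro x y h
      have := e2.injective (Subtype.ext h)
      have := congrArg Fin.val this
      exact e1.injective (Fin.ext this)
    have fmem : ∀ x, f x ∈ A := fun x => (e2 _).2
    refine Or.inl ⟨f, finj, fun x => hAsub (fmem x), ?_⟩
    intro a b hab
    have h1 : f none ≠ f (some a) := fun h => nomatch finj h
    have h2 : f none ≠ f (some b) := fun h => nomatch finj h
    have h3 : f (some a) ≠ f (some b) := fun h => hab.ne (Option.some.injEq _ _ ▸ (finj h))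
    apply hAe
    · intro w hw
      rcases Finset.mem_insert.mp hw with rfl | hw
      · exact fmem none
      rcases Finset.mem_insert.mp hw with rfl | hw
      · exact fmem (some a)
      · exact (Finset.mem_singleton.mp hw) ▸ fmem (some b)
    · rw [Finset.card_insert_of_notMem (by simp [h1, h2]),
        Finset.card_insert_of_notMem (by simp [h3]), Finset.card_singleton]
  · exact Or.inr ⟨B, hBsub, hBcard, hBe⟩

lemma not_hasRamsey (V : Type) (G : SimpleGraph V) (hG : ¬ G.Colorable 2) {N n : ℕ}
    (r : Fin N → Fin N → Bool) (ht : IsTournament r)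
    (hng : ¬ ∃ g : Fin n → Fin N, Function.Injective g ∧
      ∀ i j : Fin n, i < j → r (g i) (g j) = true) :
    ¬ HasRamseyHG V G N n := by
  classical
  intro hRam
  set C : Finset ℕ → Bool := fun e =>
    decide (∃ a b c : Fin N, (a : ℕ) ∈ e ∧ (b : ℕ) ∈ e ∧ (c : ℕ) ∈ e ∧ CyclicTriple r a b c)
    with hCdef
  rcases hRam C with ⟨f, finj, frange, fred⟩ | ⟨T, hTsub, hTcard, hblue⟩
  · have hfN : ∀ x, f x < N := fun x => Finset.mem_range.mp (frange x)
    set f' : Option V → Fin N := fun x => ⟨f x, hfN x⟩ with hf'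
    apply no_red V G hG r ht
    refine ⟨f', fun x y h => finj (congrArg Fin.val h), ?_⟩
    intro a b hab
    obtain ⟨x, y, z, hx, hy, hz, hcyc⟩ := of_decide_eq_true (fred a b hab)
    obtain ⟨hxy, hxz, hyz⟩ := cyc_ne ht hcyc
    set e : Finset ℕ := {f none, f (some a), f (some b)} with he
    have hecard : e.card ≤ 3 := by
      calc e.card ≤ ({f (some a), f (some b)} : Finset ℕ).card + 1 :=
            Finset.card_insert_le _ _
        _ ≤ (({f (some b)} : Finset ℕ).card + 1) + 1 :=
            Nat.add_le_add_right (Finset.card_insert_le _ _) 1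
        _ = 3 := by rw [Finset.card_singleton]
    have hsub : ({(x : ℕ), (y : ℕ), (z : ℕ)} : Finset ℕ) ⊆ e :=
      Finset.insert_subset_iff.mpr ⟨hx, Finset.insert_subset_iff.mpr
        ⟨hy, Finset.singleton_subset_iff.mpr hz⟩⟩
    have hcard3 : ({(x : ℕ), (y : ℕ), (z : ℕ)} : Finset ℕ).card = 3 := by
      rw [Finset.card_insert_of_notMem (by
          simp only [Finset.mem_insert, Finset.mem_singleton]
          push_neg
          exact ⟨fun h => hxy (Fin.ext h), fun h => hxz (Fin.ext h)⟩),
        Finset.card_insert_of_notMem (by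
          simp only [Finset.mem_singleton]
          exact fun h => hyz (Fin.ext h)),
        Finset.card_singleton]
    have heq : ({(x : ℕ), (y : ℕ), (z : ℕ)} : Finset ℕ) = e :=
      Finset.eq_of_subset_of_card_le hsub (by omega)
    have hmem : ∀ w : Option V, f w ∈ ({(x : ℕ), (y : ℕ), (z : ℕ)} : Finset ℕ) →
        f' w = x ∨ f' w = y ∨ f' w = z := by
      intro w hw
      rcases Finset.mem_insert.mp hw with h | hw
      · exact Or.inl (Fin.ext h)
      rcases Finset.mem_insert.mp hw with h | hw
      · exact Or.inr (Or.inl (Fin.ext h))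
      · exact Or.inr (Or.inr (Fin.ext (Finset.mem_singleton.mp hw)))
    have hm1 := hmem none (heq ▸ (by simp [he] : f none ∈ e))
    have hm2 := hmem (some a) (heq ▸ (by simp [he] : f (some a) ∈ e))
    have hm3 := hmem (some b) (heq ▸ (by simp [he] : f (some b) ∈ e))
    have finj' : Function.Injective f' := fun x y h => finj (congrArg Fin.val h)
    have hd1 : f' none ≠ f' (some a) := fun h => nomatch finj' h
    have hd2 : f' none ≠ f' (some b) := fun h => nomatch finj' h
    have hd3 : f' (some a) ≠ f' (some b) := fun h =>
      hab.ne (Option.some.injEq _ _ ▸ (finj' h))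
    exact cyc_of_mem hcyc hm1 hm2 hm3 hd1 hd2 hd3
  · have hTN : ∀ m ∈ T, m < N := fun m hm => Finset.mem_range.mp (hTsub hm)
    apply hng
    apply no_blue r ht (T.attachFin hTN) (by rw [Finset.card_attachFin]; exact hTcard)
    intro a ha b hb c hc hab hac hbc hcyc
    have haT : (a : ℕ) ∈ T := (Finset.mem_attachFin hTN).mp ha
    have hbT : (b : ℕ) ∈ T := (Finset.mem_attachFin hTN).mp hb
    have hcT : (c : ℕ) ∈ T := (Finset.mem_attachFin hTN).mp hc
    set e : Finset ℕ := {(a : ℕ), (b : ℕ), (c : ℕ)} with he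
    have hsub : e ⊆ T :=
      Finset.insert_subset_iff.mpr ⟨haT, Finset.insert_subset_iff.mpr
        ⟨hbT, Finset.singleton_subset_iff.mpr hcT⟩⟩
    have hcard3 : e.card = 3 := by
      rw [he, Finset.card_insert_of_notMem (by
          simp only [Finset.mem_insert, Finset.mem_singleton]
          push_neg
          exact ⟨fun h => hab (Fin.ext h), fun h => hac (Fin.ext h)⟩),
        Finset.card_insert_of_notMem (by
          simp only [Finset.mem_singleton]
          exact fun h => hbc (Fin.ext h)),
        Finset.card_singleton]
    have hfalse := hblue e hsub hcard3
    have htrue : C e = true := by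
      rw [hCdef]
      exact decide_eq_true ⟨a, b, c, by simp [he], by simp [he], by simp [he], hcyc⟩
    rw [htrue] at hfalse
    exact absurd hfalse (by simp)

/-- For every non-bipartite graph `G` there is an absolute constant `c' > 0` such that
`r(H_G, Kₙ⁽³⁾) ≥ 2^{c'n}`; moreover, if there is a tournament on `N` vertices with no
transitive subtournament of order `n`, then the coloring of the triples of its vertex set in
which a triple is red iff it is a cyclic triangle contains no red copy of `H_G` and no blue
set of size `n`. -/
theorem rHG_lower :
    ∃ c' : ℝ, 0 < c' ∧
      ∀ (V : Type) [Fintype V] (G : SimpleGraph V), ¬ G.Colorable 2 →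
        (∀ n : ℕ, 2 ≤ n → (2 : ℝ) ^ (c' * n) ≤ (rHG V G n : ℝ)) ∧
        (∀ n N : ℕ, ∀ r : Fin N → Fin N → Bool, IsTournament r →
          (¬ ∃ g : Fin n → Fin N, Function.Injective g ∧
            ∀ i j : Fin n, i < j → r (g i) (g j) = true) →
          (¬ ∃ f : Option V → Fin N, Function.Injective f ∧
            ∀ a b : V, G.Adj a b → CyclicTriple r (f none) (f (some a)) (f (some b))) ∧
          (¬ ∃ T : Finset (Fin N), T.card = n ∧ ∀ a ∈ T, ∀ b ∈ T, ∀ c ∈ T,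
            a ≠ b → a ≠ c → b ≠ c → ¬ CyclicTriple r a b c)) := by
  refine ⟨1/4, by norm_num, ?_⟩
  intro V _ G hG
  constructor
  · intro n hn
    have hne : {N | HasRamseyHG V G N n}.Nonempty := hasRamsey_exists V G n
    have hmem : rHG V G n ∈ {N | HasRamseyHG V G N n} := Nat.sInf_mem hne
    by_contra hlt
    push_neg at hlt
    set N := rHG V G n with hNdef
    have h1 : (N : ℝ) < (2 : ℝ) ^ ((1:ℝ)/4 * n) := hlt
    have hNn : N ^ n < 2 ^ (∑ i ∈ Finset.range n, i) := by
      have gauss : (∑ i ∈ Finset.range n, i) * 2 = n * (n - 1) :=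
        Finset.sum_range_id_mul_two n
      have h2 : (N : ℝ) ^ n < ((2 : ℝ) ^ ((1:ℝ)/4 * n)) ^ n :=
        pow_lt_pow_left₀ h1 (Nat.cast_nonneg N) (by omega)
      have h3 : ((2 : ℝ) ^ ((1:ℝ)/4 * n)) ^ n = (2 : ℝ) ^ ((1:ℝ)/4 * n * n) := by
        rw [← Real.rpow_natCast ((2 : ℝ) ^ ((1:ℝ)/4 * (n:ℝ))) n,
          ← Real.rpow_mul (by norm_num)]
      have h4 : (1:ℝ)/4 * n * n ≤ ((∑ i ∈ Finset.range n, i : ℕ) : ℝ) := by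
        have hg : ((∑ i ∈ Finset.range n, i : ℕ) : ℝ) * 2 = (n : ℝ) * ((n : ℝ) - 1) := by
          have := congrArg (fun k : ℕ => (k : ℝ)) gauss
          push_cast [Nat.cast_sub (by omega : 1 ≤ n)] at this ⊢
          linarith [this]
        have hn' : (2 : ℝ) ≤ (n : ℝ) := by exact_mod_cast hn
        nlinarith
      have h5 : (2 : ℝ) ^ ((1:ℝ)/4 * n * n) ≤
          (2 : ℝ) ^ (((∑ i ∈ Finset.range n, i : ℕ) : ℝ)) :=
        Real.rpow_le_rpow_of_exponent_le one_le_two h4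
      have h6 : (2 : ℝ) ^ (((∑ i ∈ Finset.range n, i : ℕ) : ℝ)) =
          ((2 ^ (∑ i ∈ Finset.range n, i) : ℕ) : ℝ) := by
        rw [Real.rpow_natCast]
        push_cast
        ring
      have h7 : ((N ^ n : ℕ) : ℝ) < ((2 ^ (∑ i ∈ Finset.range n, i) : ℕ) : ℝ) := by
        push_cast
        calc (N : ℝ) ^ n < ((2 : ℝ) ^ ((1:ℝ)/4 * n)) ^ n := h2
          _ = (2 : ℝ) ^ ((1:ℝ)/4 * n * n) := h3
          _ ≤ (2 : ℝ) ^ (((∑ i ∈ Finset.range n, i : ℕ) : ℝ)) := h5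
          _ = ((2 ^ (∑ i ∈ Finset.range n, i) : ℕ) : ℝ) := h6
          _ = (2 : ℝ) ^ (∑ i ∈ Finset.range n, i) := by push_cast; ring
      exact_mod_cast h7
    obtain ⟨r, htour, hng⟩ := exists_tournament n N hNn
    exact not_hasRamsey V G hG r htour hng hmem
  · intro n N r htour hng
    refine ⟨no_red V G hG r htour, ?_⟩
    rintro ⟨T, hc, hT⟩
    exact hng (no_blue r htour T hc hT)
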